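/- Let G and F be free abelian groups of the same finite rank n (for instance G = F = (Fin n → ℤ), or ℤ-modules each equipped with a basis indexed by Fin n). Let A be a subgroup of G, B a subgroup of F, and φ : A ≃+ B an isomorphism of groups. If there exist additive group homomorphisms σ : G →+ F and τ : F →+ G such that σ agrees with φ on A and τ agrees with φ⁻¹ on B, then there exists an additive group isomorphism ψ : G ≃+ F that agrees with φ on A. In particular, every finitely generated free abelian group is weakly homogeneous. -/

import Mathlib

open Submodule Module

/-- The saturation of an additive subgroup, as a `ℤ`-submodule. -/
private def satZ {G : Type*} [AddCommGroup G] (A : AddSubgroup G) : Submodule ℤ G where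
  carrier := {g | ∃ k : ℤ, k ≠ 0 ∧ k • g ∈ A}
  zero_mem' := ⟨1, one_ne_zero, by simpa using A.zero_mem⟩
  add_mem' := by
    rintro x y ⟨k, hk, hkx⟩ ⟨m, hm, hmy⟩
    refine ⟨k * m, mul_ne_zero hk hm, ?_⟩
    rw [smul_add]
    refine A.add_mem ?_ ?_
    · rw [mul_comm, mul_smul]; exact AddSubgroup.zsmul_mem A hkx m
    · rw [mul_smul]; exact AddSubgroup.zsmul_mem A hmy k
  smul_mem' := by
    rintro c x ⟨k, hk, hkx⟩
    refine ⟨k, hk, ?_⟩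
    rw [smul_comm]
    exact AddSubgroup.zsmul_mem A hkx c

private theorem mem_satZ {G : Type*} [AddCommGroup G] {A : AddSubgroup G} {g : G} :
    g ∈ satZ A ↔ ∃ k : ℤ, k ≠ 0 ∧ k • g ∈ A := Iff.rfl

/-- Finitely generated free abelian groups are weakly homogeneous: if `φ : A ≃+ B` is an
isomorphism between subgroups of free abelian groups `G`, `F` of the same finite rank `n`,
and both `φ` and `φ⁻¹` extend to homomorphisms `G →+ F` and `F →+ G`, then `φ` extends
to an isomorphism `G ≃+ F`. -/
theorem free_abelian_weakly_homogeneous {n : ℕ} {G F : Type*}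
    [AddCommGroup G] [AddCommGroup F]
    (bG : Basis (Fin n) ℤ G) (bF : Basis (Fin n) ℤ F)
    (A : AddSubgroup G) (B : AddSubgroup F) (φ : A ≃+ B)
    (σ : G →+ F) (hσ : ∀ a : A, σ (a : G) = (φ a : F))
    (τ : F →+ G) (hτ : ∀ b : B, τ (b : F) = (φ.symm b : G)) :
    ∃ ψ : G ≃+ F, ∀ a : A, ψ (a : G) = (φ a : F) := by
  haveI : Module.Free ℤ G := Module.Free.of_basis bG
  haveI : Module.Free ℤ F := Module.Free.of_basis bF
  haveI : Module.Finite ℤ G := Module.Finite.of_basis bG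
  haveI : Module.Finite ℤ F := Module.Finite.of_basis bF
  haveI : NoZeroSMulDivisors ℤ G := ⟨fun h => bG.smul_eq_zero.1 h⟩
  haveI : NoZeroSMulDivisors ℤ F := ⟨fun h => bF.smul_eq_zero.1 h⟩
  set As : Submodule ℤ G := satZ A with hAs
  set Bs : Submodule ℤ F := satZ B with hBs
  have haA : ∀ a : A, (a : G) ∈ As := fun a => ⟨1, one_ne_zero, by simpa using a.2⟩
  have hbB : ∀ b : B, (b : F) ∈ Bs := fun b => ⟨1, one_ne_zero, by simpa using b.2⟩
  -- σ maps As into Bs, τ maps Bs into As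
  have hσA : ∀ g ∈ As, σ g ∈ Bs := by
    rintro g ⟨k, hk, hkg⟩
    refine ⟨k, hk, ?_⟩
    have : σ (k • g) = (φ ⟨k • g, hkg⟩ : F) := hσ ⟨k • g, hkg⟩
    rw [← map_zsmul σ k g] at *
    rw [this]; exact (φ ⟨k • g, hkg⟩).2
  have hτB : ∀ f ∈ Bs, τ f ∈ As := by
    rintro f ⟨k, hk, hkf⟩
    refine ⟨k, hk, ?_⟩
    have : τ (k • f) = (φ.symm ⟨k • f, hkf⟩ : G) := hτ ⟨k • f, hkf⟩
    rw [← map_zsmul τ k f] at *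
    rw [this]; exact (φ.symm ⟨k • f, hkf⟩).2
  have hτσ : ∀ g ∈ As, τ (σ g) = g := by
    rintro g ⟨k, hk, hkg⟩
    refine smul_right_injective G hk ?_
    calc k • τ (σ g) = τ (σ (k • g)) := by rw [map_zsmul σ, map_zsmul τ]
    _ = τ ((φ ⟨k • g, hkg⟩ : F)) := by rw [hσ ⟨k • g, hkg⟩]
    _ = (φ.symm (φ ⟨k • g, hkg⟩) : G) := hτ _
    _ = k • g := by rw [φ.symm_apply_apply]
  have hστ : ∀ f ∈ Bs, σ (τ f) = f := by
    rintro f ⟨k, hk, hkf⟩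
    refine smul_right_injective F hk ?_
    calc k • σ (τ f) = σ (τ (k • f)) := by rw [map_zsmul τ, map_zsmul σ]
    _ = σ ((φ.symm ⟨k • f, hkf⟩ : G)) := by rw [hτ ⟨k • f, hkf⟩]
    _ = (φ (φ.symm ⟨k • f, hkf⟩) : F) := hσ _
    _ = k • f := by rw [φ.apply_symm_apply]
  -- the restricted isomorphism As ≃ₗ Bs
  let σl : G →ₗ[ℤ] F := σ.toIntLinearMap
  let τl : F →ₗ[ℤ] G := τ.toIntLinearMap
  let sA : As →ₗ[ℤ] Bs := (σl.domRestrict As).codRestrict Bs fun x => hσA x x.2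
  let tB : Bs →ₗ[ℤ] As := (τl.domRestrict Bs).codRestrict As fun y => hτB y y.2
  let e1 : As ≃ₗ[ℤ] Bs := LinearEquiv.ofLinear sA tB
    (by ext y; exact hστ y y.2) (by ext x; exact hτσ x x.2)
  -- quotients are torsion-free, finite, hence free
  haveI hQG : NoZeroSMulDivisors ℤ (G ⧸ As) := by
    constructor
    intro k x h
    rcases eq_or_ne k 0 with hk | hk
    · exact Or.inl hk
    refine Or.inr ?_
    obtain ⟨g, rfl⟩ := As.mkQ_surjective x
    rw [← map_smul, As.mkQ_apply, Submodule.Quotient.mk_eq_zero] at h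
    obtain ⟨m, hm, hmk⟩ := h
    rw [As.mkQ_apply, Submodule.Quotient.mk_eq_zero]
    exact ⟨m * k, mul_ne_zero hm hk, by rwa [mul_smul]⟩
  haveI hQF : NoZeroSMulDivisors ℤ (F ⧸ Bs) := by
    constructor
    intro k x h
    rcases eq_or_ne k 0 with hk | hk
    · exact Or.inl hk
    refine Or.inr ?_
    obtain ⟨f, rfl⟩ := Bs.mkQ_surjective x
    rw [← map_smul, Bs.mkQ_apply, Submodule.Quotient.mk_eq_zero] at h
    obtain ⟨m, hm, hmk⟩ := h
    rw [Bs.mkQ_apply, Submodule.Quotient.mk_eq_zero]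
    exact ⟨m * k, mul_ne_zero hm hk, by rwa [mul_smul]⟩
  haveI : Module.Free ℤ (G ⧸ As) := Module.free_of_finite_type_torsion_free'
  haveI : Module.Free ℤ (F ⧸ Bs) := Module.free_of_finite_type_torsion_free'
  -- sections of the quotient maps
  obtain ⟨sG, hsG⟩ := Module.projective_lifting_property As.mkQ
    (LinearMap.id : (G ⧸ As) →ₗ[ℤ] (G ⧸ As)) As.mkQ_surjective
  obtain ⟨sF, hsF⟩ := Module.projective_lifting_property Bs.mkQ
    (LinearMap.id : (F ⧸ Bs) →ₗ[ℤ] (F ⧸ Bs)) Bs.mkQ_surjective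
  have hsG' : ∀ x, As.mkQ (sG x) = x := fun x => congrArg (· x) (congrArg DFunLike.coe hsG)
  have hsF' : ∀ x, Bs.mkQ (sF x) = x := fun x => congrArg (· x) (congrArg DFunLike.coe hsF)
  -- G ≃ As × (G ⧸ As)
  have hmemG : ∀ g : G, g - sG (As.mkQ g) ∈ As := by
    intro g
    rw [← Submodule.Quotient.mk_eq_zero As]
    show As.mkQ _ = 0
    rw [map_sub, hsG', sub_self]
  have hmemF : ∀ f : F, f - sF (Bs.mkQ f) ∈ Bs := by
    intro f
    rw [← Submodule.Quotient.mk_eq_zero Bs]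
    show Bs.mkQ _ = 0
    rw [map_sub, hsF', sub_self]
  let fG : G →ₗ[ℤ] As × (G ⧸ As) :=
    LinearMap.prod ((LinearMap.id - sG ∘ₗ As.mkQ).codRestrict As hmemG) As.mkQ
  let gG : As × (G ⧸ As) →ₗ[ℤ] G := LinearMap.coprod As.subtype sG
  have haq : ∀ a : As, As.mkQ (a : G) = 0 := fun a => (Submodule.Quotient.mk_eq_zero As).2 a.2
  have hb : ∀ b : Bs, Bs.mkQ (b : F) = 0 := fun b => (Submodule.Quotient.mk_eq_zero Bs).2 b.2
  let eG : G ≃ₗ[ℤ] As × (G ⧸ As) := LinearEquiv.ofLinear fG gG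
    (by
      apply LinearMap.ext
      rintro ⟨a, q⟩
      have h1 : As.mkQ ((a : G) + sG q) = q := by rw [map_add, haq, hsG', zero_add]
      refine Prod.ext (Subtype.ext ?_) ?_
      · show ((a : G) + sG q) - sG (As.mkQ ((a : G) + sG q)) = (a : G)
        rw [h1]; abel
      · exact h1)
    (by
      apply LinearMap.ext
      intro g
      show (g - sG (As.mkQ g)) + sG (As.mkQ g) = g
      abel)
  let fF : F →ₗ[ℤ] Bs × (F ⧸ Bs) :=
    LinearMap.prod ((LinearMap.id - sF ∘ₗ Bs.mkQ).codRestrict Bs hmemF) Bs.mkQ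
  let gF : Bs × (F ⧸ Bs) →ₗ[ℤ] F := LinearMap.coprod Bs.subtype sF
  let eF : F ≃ₗ[ℤ] Bs × (F ⧸ Bs) := LinearEquiv.ofLinear fF gF
    (by
      apply LinearMap.ext
      rintro ⟨b, q⟩
      have h1 : Bs.mkQ ((b : F) + sF q) = q := by rw [map_add, hb, hsF', zero_add]
      refine Prod.ext (Subtype.ext ?_) ?_
      · show ((b : F) + sF q) - sF (Bs.mkQ ((b : F) + sF q)) = (b : F)
        rw [h1]; abel
      · exact h1)
    (by
      apply LinearMap.ext
      intro f
      show (f - sF (Bs.mkQ f)) + sF (Bs.mkQ f) = f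
      abel)
  -- compare ranks of the complements
  have hrkG : finrank ℤ G = finrank ℤ As + finrank ℤ (G ⧸ As) := by
    rw [eG.finrank_eq, Module.finrank_prod]
  have hrkF : finrank ℤ F = finrank ℤ Bs + finrank ℤ (F ⧸ Bs) := by
    rw [eF.finrank_eq, Module.finrank_prod]
  have hrk1 : finrank ℤ As = finrank ℤ Bs := e1.finrank_eq
  have hGn : finrank ℤ G = n := by rw [finrank_eq_card_basis bG, Fintype.card_fin]
  have hFn : finrank ℤ F = n := by rw [finrank_eq_card_basis bF, Fintype.card_fin]
  have hQrk : finrank ℤ (G ⧸ As) = finrank ℤ (F ⧸ Bs) := by omega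
  -- an isomorphism between the complements
  let cG := Module.Free.chooseBasis ℤ (G ⧸ As)
  let cF := Module.Free.chooseBasis ℤ (F ⧸ Bs)
  have hcard : Fintype.card (Module.Free.ChooseBasisIndex ℤ (G ⧸ As)) =
      Fintype.card (Module.Free.ChooseBasisIndex ℤ (F ⧸ Bs)) := by
    rw [← Module.finrank_eq_card_chooseBasisIndex, ← Module.finrank_eq_card_chooseBasisIndex]
    exact hQrk
  let e2 : (G ⧸ As) ≃ₗ[ℤ] (F ⧸ Bs) := cG.equiv cF (Fintype.equivOfCardEq hcard)
  -- glue
  let ψl : G ≃ₗ[ℤ] F := eG ≪≫ₗ (e1.prodCongr e2) ≪≫ₗ eF.symm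
  refine ⟨ψl.toAddEquiv, ?_⟩
  intro a
  show ψl (a : G) = (φ a : F)
  have h1 : eG (a : G) = (⟨(a : G), haA a⟩, 0) := by
    refine Prod.ext (Subtype.ext ?_) ?_
    · show (a : G) - sG (As.mkQ (a : G)) = (a : G)
      rw [haq ⟨(a : G), haA a⟩, map_zero, sub_zero]
    · exact haq ⟨(a : G), haA a⟩
  have h2 : (e1.prodCongr e2) (⟨(a : G), haA a⟩, 0) = (⟨σ (a : G), hσA _ (haA a)⟩, 0) := by
    refine Prod.ext ?_ ?_
    · rfl
    · exact map_zero e2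
  have h3 : eF.symm (⟨σ (a : G), hσA _ (haA a)⟩, 0) = σ (a : G) := by
    show gF (⟨σ (a : G), hσA _ (haA a)⟩, 0) = σ (a : G)
    show σ (a : G) + sF 0 = σ (a : G)
    rw [map_zero, add_zero]
  calc ψl (a : G) = eF.symm ((e1.prodCongr e2) (eG (a : G))) := rfl
  _ = σ (a : G) := by rw [h1, h2, h3]
  _ = (φ a : F) := hσ a
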